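/- Let p be an odd prime, G = E_p(p^3), and f₁, f₂ the standard generating 2-cocycles of H²(G, Q/Z). For 1 ≤ i ≤ p−1 and the subgroup H_i' = ⟨a b^i, c⟩ ≅ (C_p)², the kernel of the restriction map H²(G, Q/Z) → H²(H_i', Q/Z) is the cyclic group of order p generated by the class of f₁ · f₂^{(−1)·i^{−1}}, where i^{−1} is the inverse of i mod p. -/

import Mathlib

/-- The Heisenberg group `G = E_p(p³) = ⟨a,b,c ∣ aᵖ = bᵖ = cᵖ = 1, [b,a] = c, [c,a] = [c,b] = 1⟩`
(the extraspecial group of order `p³` and exponent `p`, for odd `p`): every element has a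
unique normal form `a^s b^t c^u`, and we encode it as the triple `(s, t, u)`; the relations
give `b^t a^s = a^s b^t c^{t s}`, whence the multiplication rule below. -/
@[ext] structure Heis (p : ℕ) where
  s : ZMod p
  t : ZMod p
  u : ZMod p

namespace Heis

variable {p : ℕ}

instance : Group (Heis p) where
  mul x y := ⟨x.s + y.s, x.t + y.t, x.u + y.u + x.t * y.s⟩
  one := ⟨0, 0, 0⟩
  inv x := ⟨-x.s, -x.t, -x.u + x.t * x.s⟩
  mul_assoc x y z := by
    refine Heis.ext (add_assoc _ _ _) (add_assoc _ _ _) ?_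
    show x.u + y.u + x.t * y.s + z.u + (x.t + y.t) * z.s
       = x.u + (y.u + z.u + y.t * z.s) + x.t * (y.s + z.s)
    ring
  one_mul x := by
    refine Heis.ext (zero_add _) (zero_add _) ?_
    show 0 + x.u + 0 * x.s = x.u; ring
  mul_one x := by
    refine Heis.ext (add_zero _) (add_zero _) ?_
    show x.u + 0 + x.t * 0 = x.u; ring
  inv_mul_cancel x := by
    refine Heis.ext (neg_add_cancel _) (neg_add_cancel _) ?_
    show -x.u + x.t * x.s + x.u + -x.t * x.s = 0; ring

@[simp] lemma mul_def (x y : Heis p) :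
    x * y = ⟨x.s + y.s, x.t + y.t, x.u + y.u + x.t * y.s⟩ := rfl

@[simp] lemma one_def : (1 : Heis p) = ⟨0, 0, 0⟩ := rfl

@[simp] lemma inv_def (x : Heis p) : x⁻¹ = ⟨-x.s, -x.t, -x.u + x.t * x.s⟩ := rfl

/-- The generator `a`. -/
def a : Heis p := ⟨1, 0, 0⟩
/-- The generator `b`. -/
def b : Heis p := ⟨0, 1, 0⟩
/-- The generator `c = [b,a] = b⁻¹a⁻¹ba`. -/
def c : Heis p := ⟨0, 0, 1⟩

lemma c_eq_commutator : (c : Heis p) = b⁻¹ * a⁻¹ * b * a := by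
  simp [a, b, c]

end Heis

/-- The group `ℚ/ℤ` (realized as `AddCircle (1 : ℚ) = ℚ ⧸ ℤ`). -/
abbrev QZ := AddCircle (1 : ℚ)

namespace Heis

/-- The 2-cocycle `f₁` on `G = E_p(p³)` with values in `ℚ/ℤ` (trivial action):
`f₁(a^{s₁}b^{t₁}c^{u₁}, a^{s₂}b^{t₂}c^{u₂}) = (u₁s₂ + t₁·s₂(s₂−1)/2)/p mod ℤ`. -/
noncomputable def f₁ (p : ℕ) (g h : Heis p) : QZ :=
  (((g.u.val * h.s.val + g.t.val * (h.s.val * (h.s.val - 1) / 2) : ℕ) : ℚ) / (p : ℚ) : QZ)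

/-- The 2-cocycle `f₂` on `G = E_p(p³)` with values in `ℚ/ℤ` (trivial action):
`f₂(a^{s₁}b^{t₁}c^{u₁}, a^{s₂}b^{t₂}c^{u₂}) = (t₁(t₁−1)/2·s₂ + (t₁s₂ + u₁)t₂)/p mod ℤ`. -/
noncomputable def f₂ (p : ℕ) (g h : Heis p) : QZ :=
  (((g.t.val * (g.t.val - 1) / 2 * h.s.val + (g.t.val * h.s.val + g.u.val) * h.t.val : ℕ) : ℚ)
    / (p : ℚ) : QZ)

end Heis

/-- `f : K × K → A` is a 2-cocycle for the trivial action of the group `K` on the abelian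
group `A`: `f(g₁,g₂) + f(g₁g₂,g₃) = f(g₂,g₃) + f(g₁,g₂g₃)`. -/
def IsTwoCocycle {K : Type*} [Group K] {A : Type*} [AddCommGroup A] (f : K → K → A) : Prop :=
  ∀ g₁ g₂ g₃ : K, f g₁ g₂ + f (g₁ * g₂) g₃ = f g₂ g₃ + f g₁ (g₂ * g₃)

/-- `f : K × K → A` is a 2-coboundary for the trivial action of the group `K` on the abelian
group `A`: `f(g,h) = φ(h) − φ(gh) + φ(g)` for some `φ : K → A`. -/
def IsTwoCoboundary {K : Type*} [Group K] {A : Type*} [AddCommGroup A] (f : K → K → A) : Prop :=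
  ∃ φ : K → A, ∀ g h : K, f g h = φ h - φ (g * h) + φ g


section Aux

namespace QZAux

lemma coe_add (x y : ℚ) : ((x + y : ℚ) : QZ) = (x : QZ) + (y : QZ) := rfl

lemma coe_sub (x y : ℚ) : ((x - y : ℚ) : QZ) = (x : QZ) - (y : QZ) := rfl

lemma coe_nsmul (n : ℕ) (x : ℚ) : ((n * x : ℚ) : QZ) = n • (x : QZ) := by
  induction n with
  | zero => simp
  | succ k ih => push_cast; rw [add_mul, one_mul, coe_add, ih, add_smul, one_smul]

lemma coe_eq_of_sub_int (r r' : ℚ) (n : ℤ) (h : r - r' = n) : (r : QZ) = (r' : QZ) := by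
  rw [← sub_eq_zero, ← coe_sub, h]
  rw [AddCircle.coe_eq_zero_iff]
  exact ⟨n, by simp⟩

lemma qz_eq_iff (p : ℕ) [NeZero p] (A B : ℤ) :
    (((A : ℚ) / (p : ℚ) : ℚ) : QZ) = (((B : ℚ) / (p : ℚ) : ℚ) : QZ) ↔ (A : ZMod p) = (B : ZMod p) := by
  have hp : (p : ℚ) ≠ 0 := Nat.cast_ne_zero.mpr (NeZero.ne p)
  constructor
  · intro h
    rw [← sub_eq_zero, ← coe_sub, AddCircle.coe_eq_zero_iff] at h
    obtain ⟨n, hn⟩ := h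
    have h1 : (A : ℚ) - B = n * p := by
      field_simp at hn
      simp only [zsmul_eq_mul, mul_one] at hn
      linarith [hn]
    have h2 : A - B = n * p := by exact_mod_cast h1
    rw [ZMod.intCast_eq_intCast_iff]
    exact (Int.modEq_iff_dvd.mpr ⟨n, by linear_combination h2⟩).symm
  · intro h
    rw [ZMod.intCast_eq_intCast_iff] at h
    obtain ⟨n, hn⟩ : (p : ℤ) ∣ B - A := Int.ModEq.dvd h
    refine coe_eq_of_sub_int _ _ (-n) ?_
    rw [div_sub_div_same]
    have h1 : A - B = -n * p := by linear_combination -hn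
    have : (A : ℚ) - B = (-n : ℤ) * p := by exact_mod_cast h1
    rw [this]; push_cast; field_simp

lemma qz_eq_iff_nat (p : ℕ) [NeZero p] (A B : ℕ) :
    (((A : ℚ) / (p : ℚ) : ℚ) : QZ) = (((B : ℚ) / (p : ℚ) : ℚ) : QZ) ↔ (A : ZMod p) = (B : ZMod p) := by
  have h := qz_eq_iff p (A : ℤ) (B : ℤ)
  push_cast at h
  exact h

/-- The potential whose coboundary matches `l·f₁ + m·f₂` on the subgroup. -/
noncomputable def Psi (L M : ℤ) (p : ℕ) (S : ℤ) : ℚ :=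
  (-(L : ℚ)) * ((S : ℚ) ^ 3 - (p : ℚ) ^ 2 * S) / 3
    - ((L : ℚ) + (M : ℚ)) * ((S : ℚ) ^ 2 - (p : ℚ) * S) / 2

lemma Psi_cob (L M : ℤ) (p : ℕ) (S T : ℤ) :
    Psi L M p S + Psi L M p T - Psi L M p (S + T)
      = ((L * S * T * (S + T + 1) + M * S * T : ℤ) : ℚ) := by
  unfold Psi; push_cast; ring

lemma Psi_period (L M : ℤ) (p : ℕ) (hp : 0 < p) (A k : ℤ) :
    ∃ n : ℤ, Psi L M p (A + p * k) / p - Psi L M p A / p = n := by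
  have h3 : (3 : ℤ) ∣ k ^ 3 - k := by
    have hz : ∀ z : ZMod 3, z ^ 3 - z = 0 := by decide
    have := (ZMod.intCast_zmod_eq_zero_iff_dvd (k ^ 3 - k) 3).mp (by push_cast; exact hz k)
    exact this
  have h2 : (2 : ℤ) ∣ k * (k - 1) := by
    have hz : ∀ z : ZMod 2, z * (z - 1) = 0 := by decide
    have := (ZMod.intCast_zmod_eq_zero_iff_dvd (k * (k - 1)) 2).mp (by push_cast; exact hz k)
    exact this
  obtain ⟨k3, hk3⟩ := h3
  obtain ⟨k2, hk2⟩ := h2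
  refine ⟨-L * (A ^ 2 * k + A * p * k ^ 2 + p ^ 2 * k3) - (L + M) * (A * k + p * k2), ?_⟩
  have hk3' : (k : ℚ) ^ 3 - k = 3 * k3 := by exact_mod_cast hk3
  have hk2' : (k : ℚ) * (k - 1) = 2 * k2 := by exact_mod_cast hk2
  have hpq : (p : ℚ) ≠ 0 := Nat.cast_ne_zero.mpr hp.ne'
  rw [div_sub_div_same, div_eq_iff hpq]
  unfold Psi
  push_cast
  linear_combination (-(L : ℚ) * (p : ℚ) ^ 3 / 3) * hk3' + (-((L : ℚ) + M) * (p : ℚ) ^ 2 / 2) * hk2'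

lemma halfcast {p : ℕ} [Fact p.Prime] (h2 : (2 : ZMod p) ≠ 0) (k : ℕ) :
    ((k * (k - 1) / 2 : ℕ) : ZMod p) = (k : ZMod p) * ((k : ZMod p) - 1) * (2 : ZMod p)⁻¹ := by
  rcases k with _ | n
  · simp
  · have hev : 2 ∣ (n + 1) * n := by
      rw [Nat.mul_comm]
      exact (Nat.even_mul_succ_self n).two_dvd
    have h := Nat.div_mul_cancel hev
    have hc := congrArg (fun t : ℕ => (t : ZMod p)) h
    simp only [Nat.cast_mul, Nat.cast_ofNat] at hc
    rw [Nat.add_sub_cancel, eq_mul_inv_iff_mul_eq₀ h2]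
    push_cast
    push_cast at hc
    linear_combination hc

end QZAux

namespace HeisAux

/-- The subgroup `{x | x.t = i·x.s}` of the Heisenberg group. -/
def K (p i : ℕ) : Subgroup (Heis p) where
  carrier := {x | x.t = (i : ZMod p) * x.s}
  mul_mem' := by
    rintro x y hx hy
    show (x * y).t = (i : ZMod p) * (x * y).s
    simp only [Heis.mul_def]
    simp only [Set.mem_setOf_eq] at hx hy
    rw [hx, hy]; ring
  one_mem' := by
    show (1 : Heis p).t = (i : ZMod p) * (1 : Heis p).s
    simp
  inv_mem' := by
    rintro x hx
    show (x⁻¹).t = (i : ZMod p) * (x⁻¹).s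
    simp only [Heis.inv_def]
    simp only [Set.mem_setOf_eq] at hx
    rw [hx]; ring

lemma b_pow {p : ℕ} (n : ℕ) : (Heis.b : Heis p) ^ n = ⟨0, (n : ZMod p), 0⟩ := by
  induction n with
  | zero => simp [Heis.b]
  | succ k ih =>
      rw [pow_succ, ih]
      refine Heis.ext ?_ ?_ ?_ <;> simp [Heis.b] <;> push_cast <;> ring

lemma a_mul_b_pow {p : ℕ} (i : ℕ) :
    (Heis.a * Heis.b ^ i : Heis p) = ⟨1, (i : ZMod p), 0⟩ := by
  rw [b_pow]
  refine Heis.ext ?_ ?_ ?_ <;> simp [Heis.a]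

lemma mem_t {p i : ℕ} {x : Heis p}
    (hx : x ∈ Subgroup.closure {Heis.a * Heis.b ^ i, Heis.c}) :
    x.t = (i : ZMod p) * x.s := by
  have hsub : Subgroup.closure {Heis.a * Heis.b ^ i, Heis.c} ≤ K p i := by
    rw [Subgroup.closure_le]
    rintro g hg
    rcases hg with rfl | rfl
    · show (Heis.a * Heis.b ^ i : Heis p).t = (i : ZMod p) * (Heis.a * Heis.b ^ i : Heis p).s
      rw [a_mul_b_pow]; simp
    · show (Heis.c : Heis p).t = (i : ZMod p) * (Heis.c : Heis p).s
      simp [Heis.c]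
  exact hsub hx

/-- Writing `l·f₁ + m·f₂` as a single fraction. -/
lemma lin (p : ℕ) (l m : ZMod p) (x y : Heis p) :
    l.val • Heis.f₁ p x y + m.val • Heis.f₂ p x y
      = ((((l.val * (x.u.val * y.s.val + x.t.val * (y.s.val * (y.s.val - 1) / 2))
          + m.val * (x.t.val * (x.t.val - 1) / 2 * y.s.val
              + (x.t.val * y.s.val + x.u.val) * y.t.val) : ℕ) : ℚ) / (p : ℚ) : ℚ) : QZ) := by
  show l.val • ((((x.u.val * y.s.val + x.t.val * (y.s.val * (y.s.val - 1) / 2) : ℕ) : ℚ)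
          / (p : ℚ) : ℚ) : QZ)
      + m.val • ((((x.t.val * (x.t.val - 1) / 2 * y.s.val
              + (x.t.val * y.s.val + x.u.val) * y.t.val : ℕ) : ℚ) / (p : ℚ) : ℚ) : QZ) = _
  rw [← QZAux.coe_nsmul, ← QZAux.coe_nsmul, ← QZAux.coe_add]
  congr 1
  push_cast
  field_simp

/-- The key computation: the cocycle `l·f₁ + m·f₂` restricted to the subgroup is the
coboundary of `x ↦ Psi(x.s.val)/p`, when `m = -l·i⁻¹`. -/
lemma key (p : ℕ) [Fact p.Prime] (h2 : (2 : ZMod p) ≠ 0) (i : ℕ) (hi0 : (i : ZMod p) ≠ 0)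
    (l m : ZMod p) (hm : m = -l * (i : ZMod p)⁻¹)
    (L M : ℕ) (hL : (L : ZMod p) = -l * (i : ZMod p) * (2 : ZMod p)⁻¹)
    (hM : (M : ZMod p) = l * (2 : ZMod p)⁻¹)
    (x y : Heis p) (hx : x.t = (i : ZMod p) * x.s) (hy : y.t = (i : ZMod p) * y.s) :
    l.val • Heis.f₁ p x y + m.val • Heis.f₂ p x y
      = ((QZAux.Psi L M p (y.s.val) / p : ℚ) : QZ)
        - ((QZAux.Psi L M p (((x * y).s).val) / p : ℚ) : QZ)
        + ((QZAux.Psi L M p (x.s.val) / p : ℚ) : QZ) := by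
  have hp0 : 0 < p := (Fact.out : p.Prime).pos
  have hpq : (p : ℚ) ≠ 0 := Nat.cast_ne_zero.mpr hp0.ne'
  set S : ℕ := x.s.val with hS
  set T : ℕ := y.s.val with hT
  -- the s-value of the product
  have hVval : ((x * y).s).val = (S + T) % p := by
    show ((x.s + y.s).val) = (S + T) % p
    rw [ZMod.val_add]
  set V : ℕ := ((x * y).s).val with hV
  have hSTV : (V : ℤ) + p * ((S + T) / p : ℕ) = (S + T : ℕ) := by
    rw [hVval]
    push_cast
    have := Nat.mod_add_div (S + T) p
    exact_mod_cast this
  -- replace Psi V by Psi (S+T) in QZ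
  obtain ⟨n, hn⟩ := QZAux.Psi_period L M p hp0 (V : ℤ) ((S + T) / p : ℕ)
  have hper : ((QZAux.Psi L M p ((S : ℤ) + T) / p : ℚ) : QZ)
      = ((QZAux.Psi L M p (V : ℤ) / p : ℚ) : QZ) := by
    refine QZAux.coe_eq_of_sub_int _ _ n ?_
    rw [← hn]
    congr 2
    rw [hSTV]; push_cast; ring
  -- numerators
  set n₁ : ℕ := x.u.val * y.s.val + x.t.val * (y.s.val * (y.s.val - 1) / 2) with hn₁
  set n₂ : ℕ := x.t.val * (x.t.val - 1) / 2 * y.s.val + (x.t.val * y.s.val + x.u.val) * y.t.val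
    with hn₂
  have hLHS : l.val • Heis.f₁ p x y + m.val • Heis.f₂ p x y
      = ((((l.val * n₁ + m.val * n₂ : ℕ) : ℚ) / (p : ℚ) : ℚ) : QZ) := by
    show l.val • ((((n₁ : ℕ) : ℚ) / (p : ℚ) : ℚ) : QZ)
        + m.val • ((((n₂ : ℕ) : ℚ) / (p : ℚ) : ℚ) : QZ) = _
    rw [← QZAux.coe_nsmul, ← QZAux.coe_nsmul, ← QZAux.coe_add]
    congr 1
    push_cast
    field_simp
  have hRHS : ((QZAux.Psi L M p (y.s.val) / p : ℚ) : QZ)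
        - ((QZAux.Psi L M p (((x * y).s).val) / p : ℚ) : QZ)
        + ((QZAux.Psi L M p (x.s.val) / p : ℚ) : QZ)
      = ((((L * S * T * (S + T + 1) + M * S * T : ℕ) : ℚ) / (p : ℚ) : ℚ) : QZ) := by
    rw [show (((x * y).s).val : ℤ) = (V : ℤ) from rfl, ← hper]
    rw [← QZAux.coe_sub, ← QZAux.coe_add]
    congr 1
    rw [div_sub_div_same, ← add_div]
    congr 1
    have hc := QZAux.Psi_cob (L : ℤ) (M : ℤ) p (S : ℤ) (T : ℤ)
    push_cast at hc ⊢
    linear_combination hc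
  rw [hLHS, hRHS, QZAux.qz_eq_iff_nat]
  rw [hn₁, hn₂]
  -- now a computation in ZMod p
  push_cast [QZAux.halfcast h2]
  simp only [hS, hT, ZMod.natCast_val, ZMod.cast_id]
  rw [hx, hy, hm, hL, hM]
  field_simp
  ring

end HeisAux

end Aux

/-- For an odd prime `p`, `G = E_p(p³)`, `1 ≤ i ≤ p−1` and the subgroup
`Hᵢ' = ⟨a bⁱ, c⟩ ≅ (C_p)²`, the kernel of the restriction map `H²(G, ℚ/ℤ) → H²(Hᵢ', ℚ/ℤ)` is
the cyclic group of order `p` generated by the class of `f₁ · f₂^{(−1)·i⁻¹}`: a class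
`l·[f₁] + m·[f₂]` (and every class has this form) restricts to zero on `Hᵢ'` if and only if
`m = −l·i⁻¹` in `ℤ/pℤ`. -/
theorem ker_restriction_Hᵢ' (p : ℕ) (hp : p.Prime) (hodd : Odd p)
    (i : ℕ) (hi1 : 1 ≤ i) (hi2 : i ≤ p - 1)
    (f : Heis p → Heis p → QZ) (hf : IsTwoCocycle f) (l m : ZMod p)
    (hlm : IsTwoCoboundary
      (fun g h => f g h - (l.val • Heis.f₁ p g h + m.val • Heis.f₂ p g h))) :
    IsTwoCoboundary
        (fun x y : (Subgroup.closure {Heis.a * Heis.b ^ i, Heis.c} : Subgroup (Heis p)) =>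
          f (x : Heis p) (y : Heis p)) ↔ m = -l * (i : ZMod p)⁻¹ := by
  haveI hfact : Fact p.Prime := ⟨hp⟩
  haveI hf1 : Fact (1 < p) := ⟨hp.one_lt⟩
  have hp0 : 0 < p := hp.pos
  have hp2 : 2 ≤ p := hp.two_le
  have hip : i < p := by omega
  have hi0 : (i : ZMod p) ≠ 0 := by
    intro h
    have h' := (ZMod.natCast_eq_zero_iff i p).mp h
    have := Nat.le_of_dvd (by omega) h'
    omega
  have h2 : (2 : ZMod p) ≠ 0 := by
    intro h
    have h' := (ZMod.natCast_eq_zero_iff 2 p).mp (by exact_mod_cast h)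
    have := Nat.le_of_dvd (by norm_num) h'
    rcases hodd with ⟨k, hk⟩
    omega
  obtain ⟨φ₀, hφ₀⟩ := hlm
  simp only at hφ₀
  constructor
  · rintro ⟨ψ, hψ⟩
    have hamem : (Heis.a * Heis.b ^ i : Heis p)
        ∈ Subgroup.closure {Heis.a * Heis.b ^ i, Heis.c} :=
      Subgroup.subset_closure (Set.mem_insert _ _)
    have hcmem : (Heis.c : Heis p) ∈ Subgroup.closure {Heis.a * Heis.b ^ i, Heis.c} :=
      Subgroup.subset_closure (Set.mem_insert_of_mem _ rfl)
    set X : (Subgroup.closure {Heis.a * Heis.b ^ i, Heis.c} : Subgroup (Heis p)) :=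
      ⟨_, hamem⟩ with hX
    set Y : (Subgroup.closure {Heis.a * Heis.b ^ i, Heis.c} : Subgroup (Heis p)) :=
      ⟨_, hcmem⟩ with hY
    have hcomm : (Heis.a * Heis.b ^ i) * Heis.c = Heis.c * (Heis.a * Heis.b ^ i : Heis p) := by
      rw [HeisAux.a_mul_b_pow]
      refine Heis.ext ?_ ?_ ?_ <;> simp [Heis.c]
    have hXY : X * Y = Y * X := Subtype.ext hcomm
    have hff : f (↑X) (↑Y) = f (↑Y) (↑X) := by
      have h1 := hψ X Y
      have h2 := hψ Y X
      simp only at h1 h2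
      rw [h1, h2, hXY]
      abel
    have e1 := hφ₀ (↑X : Heis p) (↑Y : Heis p)
    have e2 := hφ₀ (↑Y : Heis p) (↑X : Heis p)
    have hsub : f (↑X : Heis p) ↑Y - (l.val • Heis.f₁ p ↑X ↑Y + m.val • Heis.f₂ p ↑X ↑Y)
        = f (↑Y : Heis p) ↑X - (l.val • Heis.f₁ p ↑Y ↑X + m.val • Heis.f₂ p ↑Y ↑X) := by
      rw [e1, e2]
      show _ = φ₀ ↑X - φ₀ ((Heis.c : Heis p) * (Heis.a * Heis.b ^ i)) + φ₀ ↑Y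
      rw [← hcomm]
      abel
    rw [hff] at hsub
    have hsame := sub_right_injective hsub
    rw [HeisAux.lin, HeisAux.lin, QZAux.qz_eq_iff_nat] at hsame
    rw [show ((↑X : Heis p)) = ⟨1, (i : ZMod p), 0⟩ from HeisAux.a_mul_b_pow (p := p) i] at hsame
    rw [show ((↑Y : Heis p)) = ⟨0, 0, 1⟩ from rfl] at hsame
    push_cast [QZAux.halfcast h2] at hsame
    simp only [ZMod.natCast_val, ZMod.cast_id, ZMod.val_zero, ZMod.val_one,
      Nat.cast_zero, Nat.cast_one] at hsame
    -- hsame is now an equation in ZMod p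
    have hlin : l + m * (i : ZMod p) = 0 := by
      linear_combination -hsame
    have hi' : (i : ZMod p) * (i : ZMod p)⁻¹ = 1 := mul_inv_cancel₀ hi0
    linear_combination (i : ZMod p)⁻¹ * hlin + (-m) * hi'
  · intro hm
    set L : ℕ := (-l * (i : ZMod p) * (2 : ZMod p)⁻¹).val with hLdef
    set M : ℕ := (l * (2 : ZMod p)⁻¹).val with hMdef
    have hL : (L : ZMod p) = -l * (i : ZMod p) * (2 : ZMod p)⁻¹ := by
      rw [hLdef]; simp [ZMod.natCast_val, ZMod.cast_id]
    have hM : (M : ZMod p) = l * (2 : ZMod p)⁻¹ := by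
      rw [hMdef]; simp [ZMod.natCast_val, ZMod.cast_id]
    refine ⟨fun x => φ₀ (x : Heis p)
      + ((QZAux.Psi L M p (((x : Heis p)).s.val) / (p : ℚ) : ℚ) : QZ), ?_⟩
    intro x y
    have hx := HeisAux.mem_t x.2
    have hy := HeisAux.mem_t y.2
    have hk := HeisAux.key p h2 i hi0 l m hm L M hL hM (↑x) (↑y) hx hy
    have hfd := hφ₀ (↑x : Heis p) (↑y : Heis p)
    show f (↑x : Heis p) (↑y : Heis p) = _
    have hmul : ((x * y : _) : Heis p) = ((x : Heis p) * (y : Heis p)) := rfl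
    calc f (↑x : Heis p) (↑y : Heis p)
        = (f (↑x : Heis p) (↑y : Heis p)
            - (l.val • Heis.f₁ p ↑x ↑y + m.val • Heis.f₂ p ↑x ↑y))
          + (l.val • Heis.f₁ p ↑x ↑y + m.val • Heis.f₂ p ↑x ↑y) := by abel
      _ = _ := by
          rw [hfd, hk]
          beta_reduce
          rw [hmul]
          abel
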